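/- Let U ⊂ ℝ^d be a bounded nonempty open set and α ∈ [0,1]. Suppose ∂U is (d-1+α)-summable, i.e. Σ_{k=0}^∞ N_{∂U}(k) 2^{-k(d-1+α)} < ∞, where N_{∂U}(k) is the number of dyadic cubes of side 2^{-k} meeting ∂U. Then for every k, the number of Whitney cubes of generation k of U is at most 3^d · 2^d · N_{∂U}(k-1); consequently Σ_k (Card 𝒬_k) 2^{-k(d-1+α)} < ∞, where 𝒬_k denotes the Whitney cubes of generation k. -/

import Mathlib

open MeasureTheory Filter

/-- The closed dyadic `k`-cube of `ℝ^d` indexed by `ℓ : Fin d → ℤ`. -/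
def dyCube (d : ℕ) (k : ℕ) (ℓ : Fin d → ℤ) : Set (EuclideanSpace ℝ (Fin d)) :=
  {x | ∀ i, (ℓ i : ℝ) / 2 ^ k ≤ x i ∧ x i ≤ ((ℓ i : ℝ) + 1) / 2 ^ k}

/-- Whitney cubes of generation `k` of an open set `U`: dyadic `k`-cubes `Q` such that `Q`
and all of its `3^d - 1` neighbors are contained in `U`, and `Q` is not contained in a
Whitney cube of an earlier generation. -/
def whitney (d : ℕ) (U : Set (EuclideanSpace ℝ (Fin d))) (k : ℕ) : Set (Fin d → ℤ) :=
  Nat.strongRecOn k (fun k ih =>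
    {ℓ | (∀ ℓ' : Fin d → ℤ, (∀ i, |ℓ' i - ℓ i| ≤ 1) → dyCube d k ℓ' ⊆ U) ∧
      ∀ j, ∀ hj : j < k, ∀ ℓ'' ∈ ih j hj, ¬ dyCube d k ℓ ⊆ dyCube d j ℓ''})

/-- `boxCount d A k` is `N_A(k)`, the number of dyadic `k`-cubes meeting `A`. -/
noncomputable def boxCount (d : ℕ) (A : Set (EuclideanSpace ℝ (Fin d))) (k : ℕ) : ℕ∞ :=
  Set.encard {ℓ : Fin d → ℤ | (dyCube d k ℓ ∩ A).Nonempty}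

open scoped ENNReal in
theorem whitney_def (d : ℕ) (U : Set (EuclideanSpace ℝ (Fin d))) (k : ℕ) :
    whitney d U k =
    {ℓ | (∀ ℓ' : Fin d → ℤ, (∀ i, |ℓ' i - ℓ i| ≤ 1) → dyCube d k ℓ' ⊆ U) ∧
      ∀ j, j < k → ∀ ℓ'' ∈ whitney d U j, ¬ dyCube d k ℓ ⊆ dyCube d j ℓ''} := by
  show Nat.lt_wfRel.wf.fix _ k = _
  rw [WellFounded.fix_eq]
  rfl

lemma dyCube_convex (d k : ℕ) (ℓ : Fin d → ℤ) : Convex ℝ (dyCube d k ℓ) := by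
  intro x hx y hy a b ha hb hab
  intro i
  have hxi := hx i
  have hyi := hy i
  have : (a • x + b • y) i = a * x i + b * y i := rfl
  rw [this]
  constructor
  · have : (ℓ i : ℝ) / 2 ^ k = a * ((ℓ i : ℝ) / 2 ^ k) + b * ((ℓ i : ℝ) / 2 ^ k) := by
      rw [← add_mul, hab, one_mul]
    rw [this]
    exact add_le_add (mul_le_mul_of_nonneg_left hxi.1 ha) (mul_le_mul_of_nonneg_left hyi.1 hb)
  · have : ((ℓ i : ℝ) + 1) / 2 ^ k = a * (((ℓ i : ℝ) + 1) / 2 ^ k) + b * (((ℓ i : ℝ) + 1) / 2 ^ k) := by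
      rw [← add_mul, hab, one_mul]
    rw [this]
    exact add_le_add (mul_le_mul_of_nonneg_left hxi.2 ha) (mul_le_mul_of_nonneg_left hyi.2 hb)

lemma meets_frontier {X : Type*} [TopologicalSpace X] {S U : Set X} (hS : IsPreconnected S)
    (hU : IsOpen U) (h1 : (S ∩ U).Nonempty) (h2 : ¬ S ⊆ U) :
    (S ∩ frontier U).Nonempty := by
  by_contra h
  rw [Set.not_nonempty_iff_eq_empty] at h
  have hfr : ∀ x ∈ S, x ∉ frontier U := by
    intro x hx hfx
    exact absurd (Set.mem_inter hx hfx) (by rw [h]; exact Set.notMem_empty x)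
  have hsub : S ⊆ U ∪ (closure U)ᶜ := by
    intro x hx
    by_cases hxU : x ∈ U
    · exact Or.inl hxU
    · refine Or.inr fun hxc => hfr x hx ?_
      rw [frontier, hU.interior_eq]
      exact ⟨hxc, hxU⟩
  have h2' : (S ∩ (closure U)ᶜ).Nonempty := by
    obtain ⟨y, hyS, hyU⟩ := Set.not_subset.1 h2
    refine ⟨y, hyS, fun hyc => hfr y hyS ?_⟩
    rw [frontier, hU.interior_eq]
    exact ⟨hyc, hyU⟩
  obtain ⟨z, hzS, hzU, hzC⟩ := hS U (closure U)ᶜ hU isClosed_closure.isOpen_compl hsub h1 h2'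
  exact hzC (subset_closure hzU)

lemma dyCube_subset_parent (d k : ℕ) (hk : 1 ≤ k) (ℓ p : Fin d → ℤ)
    (h : ∀ i, 2 * p i ≤ ℓ i ∧ ℓ i ≤ 2 * p i + 1) :
    dyCube d k ℓ ⊆ dyCube d (k - 1) p := by
  intro x hx i
  obtain ⟨h1, h2⟩ := hx i
  obtain ⟨hp1, hp2⟩ := h i
  have h2k : (2 : ℝ) ^ k = 2 * 2 ^ (k - 1) := by
    rw [← pow_succ']
    congr 1
    omega
  have hpos : (0 : ℝ) < 2 ^ (k - 1) := by positivity
  constructor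
  · refine le_trans ?_ h1
    rw [h2k, div_le_div_iff₀ hpos (by positivity)]
    have : (2 * p i : ℝ) ≤ (ℓ i : ℝ) := by exact_mod_cast hp1
    nlinarith
  · refine le_trans h2 ?_
    rw [h2k, div_le_div_iff₀ (by positivity) hpos]
    have : (ℓ i : ℝ) + 1 ≤ 2 * p i + 2 := by
      have : (ℓ i : ℝ) ≤ 2 * p i + 1 := by exact_mod_cast hp2
      linarith
    nlinarith

lemma dyCube_inter_nonempty (d k : ℕ) (a b : Fin d → ℤ) (h : ∀ i, |a i - b i| ≤ 1) :
    (dyCube d k a ∩ dyCube d k b).Nonempty := by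
  refine ⟨WithLp.toLp 2 (fun i => ((max (a i) (b i) : ℤ) : ℝ) / 2 ^ k), fun i => ⟨?_, ?_⟩, fun i => ⟨?_, ?_⟩⟩
  · dsimp only [PiLp.toLp_apply]
    gcongr
    exact_mod_cast le_max_left _ _
  · dsimp only [PiLp.toLp_apply]
    have hh : max (a i) (b i) ≤ a i + 1 := by have := abs_le.1 (h i); omega
    gcongr
    exact_mod_cast hh
  · dsimp only [PiLp.toLp_apply]
    gcongr
    exact_mod_cast le_max_right _ _
  · dsimp only [PiLp.toLp_apply]
    have hh : max (a i) (b i) ≤ b i + 1 := by have := abs_le.1 (h i); omega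
    gcongr
    exact_mod_cast hh

lemma parent_subset_children (d k : ℕ) (hk : 1 ≤ k) (p : Fin d → ℤ)
    (x : EuclideanSpace ℝ (Fin d)) (hx : x ∈ dyCube d (k - 1) p) :
    ∃ s : Fin d → ℤ, (∀ i, s i = 2 * p i ∨ s i = 2 * p i + 1) ∧ x ∈ dyCube d k s := by
  classical
  refine ⟨fun i => if x i ≤ ((2 * p i : ℤ) + 1 : ℝ) / 2 ^ k then 2 * p i else 2 * p i + 1,
    fun i => by dsimp only; split <;> simp, fun i => ?_⟩
  dsimp only
  obtain ⟨h1, h2⟩ := hx i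
  have h2k : (2 : ℝ) ^ k = 2 * 2 ^ (k - 1) := by
    rw [← pow_succ']; congr 1; omega
  have hpos : (0 : ℝ) < 2 ^ (k - 1) := by positivity
  have hne : (2 : ℝ) ^ (k - 1) ≠ 0 := ne_of_gt hpos
  by_cases hc : x i ≤ ((2 * p i : ℤ) + 1 : ℝ) / 2 ^ k
  · rw [if_pos hc]
    constructor
    · calc ((2 * p i : ℤ) : ℝ) / 2 ^ k = (p i : ℝ) / 2 ^ (k - 1) := by
            rw [h2k]; push_cast; field_simp
        _ ≤ x i := h1
    · exact hc
  · rw [if_neg hc]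
    constructor
    · have := le_of_not_ge hc
      push_cast
      push_cast at this
      linarith
    · calc x i ≤ ((p i : ℝ) + 1) / 2 ^ (k - 1) := h2
        _ = ((2 * p i + 1 : ℤ) + 1 : ℝ) / 2 ^ k := by
            rw [h2k]; push_cast; field_simp; ring

lemma encard_box_le (d : ℕ) (b : Fin d → ℤ) :
    {ℓ : Fin d → ℤ | ∀ i, 2 * b i - 2 ≤ ℓ i ∧ ℓ i ≤ 2 * b i + 3}.encard ≤ (6 : ℕ∞) ^ d := by
  have hsub : {ℓ : Fin d → ℤ | ∀ i, 2 * b i - 2 ≤ ℓ i ∧ ℓ i ≤ 2 * b i + 3} ⊆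
      (fun s : Fin d → Fin 6 => fun i => 2 * b i - 2 + (s i : ℤ)) '' Set.univ := by
    intro ℓ hℓ
    refine ⟨fun i => ⟨(ℓ i - (2 * b i - 2)).toNat, by have := hℓ i; omega⟩, trivial, ?_⟩
    funext i
    have := hℓ i
    simp only []
    push_cast
    omega
  refine (Set.encard_le_encard hsub).trans ((Set.encard_image_le _ _).trans ?_)
  rw [Set.encard_univ, ENat.card_eq_coe_fintype_card]
  simp [Fintype.card_fun]

lemma coord_abs_le_norm (d : ℕ) (x : EuclideanSpace ℝ (Fin d)) (i : Fin d) : |x i| ≤ ‖x‖ := by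
  rw [EuclideanSpace.norm_eq, ← Real.sqrt_sq_eq_abs]
  apply Real.sqrt_le_sqrt
  have : |x i| ^ 2 ≤ ∑ j, ‖x j‖ ^ 2 :=
    Finset.single_le_sum (f := fun j => ‖x j‖ ^ 2) (fun j _ => by positivity)
      (Finset.mem_univ i) |>.trans_eq' (by rw [Real.norm_eq_abs])
  simpa [sq_abs] using this

lemma whitney_zero_finite (d : ℕ) (U : Set (EuclideanSpace ℝ (Fin d)))
    (hUb : Bornology.IsBounded U) : (whitney d U 0).Finite := by
  obtain ⟨R, hR⟩ := hUb.subset_closedBall 0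
  have hsub : whitney d U 0 ⊆ Set.univ.pi fun _ : Fin d => Set.Icc (-⌈R⌉) ⌈R⌉ := by
    intro ℓ hℓ
    rw [whitney_def] at hℓ
    have hQ := hℓ.1 ℓ (fun i => by simp)
    set x : EuclideanSpace ℝ (Fin d) := WithLp.toLp 2 (fun i => (ℓ i : ℝ)) with hxdef
    have hx : x ∈ dyCube d 0 ℓ := by
      intro i
      simp [hxdef]
    have hxb := hR (hQ hx)
    rw [Metric.mem_closedBall, dist_zero_right] at hxb
    intro i _
    have hco : |(ℓ i : ℝ)| ≤ R := le_trans (coord_abs_le_norm d x i) hxb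
    rw [abs_le] at hco
    constructor
    · have hle : (-⌈R⌉ : ℝ) ≤ (ℓ i : ℝ) := by
        push_cast
        linarith [Int.le_ceil R]
      exact_mod_cast hle
    · have hle : ((ℓ i : ℝ)) ≤ (⌈R⌉ : ℝ) := le_trans hco.2 (Int.le_ceil R)
      exact_mod_cast hle
  exact Set.Finite.subset (Set.Finite.pi fun _ => Set.finite_Icc _ _) hsub

open scoped ENNReal in
lemma whitney_count (d : ℕ) (U : Set (EuclideanSpace ℝ (Fin d))) (hUo : IsOpen U)
    (k : ℕ) (hk : 1 ≤ k) :
    (whitney d U k).encard ≤ 3 ^ d * 2 ^ d * boxCount d (frontier U) (k - 1) := by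
  classical
  set B := {m : Fin d → ℤ | (dyCube d (k - 1) m ∩ frontier U).Nonempty} with hB
  set T : (Fin d → ℤ) → Set (Fin d → ℤ) :=
    fun b => {ℓ | ∀ i, 2 * b i - 2 ≤ ℓ i ∧ ℓ i ≤ 2 * b i + 3} with hT
  have key : ∀ ℓ ∈ whitney d U k, ∃ b ∈ B, ℓ ∈ T b := by
    intro ℓ hℓ
    rw [whitney_def] at hℓ
    obtain ⟨hQ, hmin⟩ := hℓ
    set p : Fin d → ℤ := fun i => ℓ i / 2 with hp
    have hpℓ : ∀ i, 2 * p i ≤ ℓ i ∧ ℓ i ≤ 2 * p i + 1 := fun i => by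
      simp only [hp]
      omega
    have hparent : dyCube d k ℓ ⊆ dyCube d (k - 1) p := dyCube_subset_parent d k hk ℓ p hpℓ
    have hpU : dyCube d (k - 1) p ⊆ U := by
      intro x hx
      obtain ⟨s, hs, hxs⟩ := parent_subset_children d k hk p x hx
      refine hQ s (fun i => ?_) hxs
      rw [abs_le]
      rcases hs i with h | h <;> (have := hpℓ i; omega)
    have hex : ∃ m, (∀ i, |m i - p i| ≤ 1) ∧ ¬ dyCube d (k - 1) m ⊆ U := by
      by_contra hall
      push_neg at hall
      by_cases hsec : ∀ j, j < k - 1 → ∀ ℓ'' ∈ whitney d U j, ¬ dyCube d (k - 1) p ⊆ dyCube d j ℓ''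
      · have hpW : p ∈ whitney d U (k - 1) := by
          rw [whitney_def]
          exact ⟨hall, hsec⟩
        exact hmin (k - 1) (by omega) p hpW hparent
      · push_neg at hsec
        obtain ⟨j, hj, ℓ'', hℓ'', hsubs⟩ := hsec
        exact hmin j (by omega) ℓ'' hℓ'' (hparent.trans hsubs)
    obtain ⟨m, hm1, hm2⟩ := hex
    have hmeet : (dyCube d (k - 1) m ∩ U).Nonempty := by
      obtain ⟨y, hy1, hy2⟩ := dyCube_inter_nonempty d (k - 1) m p hm1
      exact ⟨y, hy1, hpU hy2⟩
    have hfr : (dyCube d (k - 1) m ∩ frontier U).Nonempty :=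
      meets_frontier (dyCube_convex d (k - 1) m).isPreconnected hUo hmeet hm2
    refine ⟨m, hfr, fun i => ?_⟩
    have h1 := hpℓ i
    have h2 := abs_le.1 (hm1 i)
    omega
  have hsub : whitney d U k ⊆ ⋃ b ∈ B, T b := by
    intro ℓ hℓ
    obtain ⟨b, hb, hℓb⟩ := key ℓ hℓ
    exact Set.mem_biUnion hb hℓb
  rw [← ENat.toENNReal_le]
  have hcast : ((3 ^ d * 2 ^ d * boxCount d (frontier U) (k - 1) : ℕ∞) : ℝ≥0∞) =
      (B.encard : ℝ≥0∞) * 6 ^ d := by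
    have hbc : boxCount d (frontier U) (k - 1) = B.encard := rfl
    rw [ENat.toENNReal_mul, ENat.toENNReal_mul, ENat.toENNReal_pow, ENat.toENNReal_pow,
      ENat.toENNReal_ofNat, ENat.toENNReal_ofNat, hbc, ← mul_pow]
    norm_num
    ring
  rw [hcast]
  calc ((whitney d U k).encard : ℝ≥0∞) ≤ ((⋃ b ∈ B, T b).encard : ℝ≥0∞) := by
        exact_mod_cast ENat.toENNReal_le.2 (Set.encard_le_encard hsub)
    _ = ∑' x : (⋃ b ∈ B, T b), (1 : ℝ≥0∞) := by rw [ENNReal.tsum_set_one]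
    _ ≤ ∑' b : B, ∑' x : T (b : Fin d → ℤ), (1 : ℝ≥0∞) :=
        ENNReal.tsum_biUnion_le_tsum 1 B T
    _ = ∑' b : B, ((T (b : Fin d → ℤ)).encard : ℝ≥0∞) := by
        simp [ENNReal.tsum_set_one]
    _ ≤ ∑' (_ : B), (6 : ℝ≥0∞) ^ d := by
        refine ENNReal.tsum_le_tsum fun b => ?_
        have := encard_box_le d (b : Fin d → ℤ)
        have h6 : (((6 : ℕ∞) ^ d : ℕ∞) : ℝ≥0∞) = (6 : ℝ≥0∞) ^ d := by
          rw [ENat.toENNReal_pow]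
          norm_num
        rw [← h6]
        exact ENat.toENNReal_le.2 this
    _ = B.encard * 6 ^ d := by rw [ENNReal.tsum_set_const]

set_option maxHeartbeats 2000000 in
theorem stmt4 (d : ℕ) (hd : 1 ≤ d) (α : ℝ) (hα : α ∈ Set.Icc (0 : ℝ) 1)
    (U : Set (EuclideanSpace ℝ (Fin d))) (hUo : IsOpen U)
    (hUb : Bornology.IsBounded U) (hUne : U.Nonempty)
    (hsum : ∑' k : ℕ, (boxCount d (frontier U) k : ENNReal) *
        ENNReal.ofReal ((2 : ℝ) ^ (-(k : ℝ) * ((d : ℝ) - 1 + α))) < ⊤) :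
    (∀ k : ℕ, 1 ≤ k →
        Set.encard (whitney d U k) ≤ 3 ^ d * 2 ^ d * boxCount d (frontier U) (k - 1)) ∧
    ∑' k : ℕ, ((whitney d U k).encard : ENNReal) *
        ENNReal.ofReal ((2 : ℝ) ^ (-(k : ℝ) * ((d : ℝ) - 1 + α))) < ⊤ := by
  refine ⟨fun k hk => whitney_count d U hUo k hk, ?_⟩
  have hc0 : 0 ≤ (d : ℝ) - 1 + α := by
    have h1 : (1 : ℝ) ≤ (d : ℝ) := by exact_mod_cast hd
    have := hα.1
    linarith
  rw [tsum_eq_zero_add' ENNReal.summable, ENNReal.add_lt_top]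
  constructor
  · refine ENNReal.mul_lt_top ?_ ENNReal.ofReal_lt_top
    rw [← ENat.toENNReal_top]
    exact ENat.toENNReal_lt.2 (whitney_zero_finite d U hUb).encard_lt_top
  · have hterm : ∀ k : ℕ,
        ((whitney d U (k + 1)).encard : ENNReal) *
          ENNReal.ofReal ((2 : ℝ) ^ (-((k + 1 : ℕ) : ℝ) * ((d : ℝ) - 1 + α))) ≤
        ((3 : ENNReal) ^ d * 2 ^ d) * ((boxCount d (frontier U) k : ENNReal) *
          ENNReal.ofReal ((2 : ℝ) ^ (-(k : ℝ) * ((d : ℝ) - 1 + α)))) := by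
      intro k
      have h1 := whitney_count d U hUo (k + 1) (by omega)
      simp only [Nat.add_sub_cancel] at h1
      have h1' : ((whitney d U (k + 1)).encard : ENNReal) ≤
          (3 : ENNReal) ^ d * 2 ^ d * (boxCount d (frontier U) k : ENNReal) := by
        have h2 := ENat.toENNReal_le.2 h1
        rwa [ENat.toENNReal_mul, ENat.toENNReal_mul, ENat.toENNReal_pow, ENat.toENNReal_pow,
          ENat.toENNReal_ofNat, ENat.toENNReal_ofNat] at h2
      have hwmono : ENNReal.ofReal ((2 : ℝ) ^ (-((k + 1 : ℕ) : ℝ) * ((d : ℝ) - 1 + α))) ≤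
          ENNReal.ofReal ((2 : ℝ) ^ (-(k : ℝ) * ((d : ℝ) - 1 + α))) := by
        apply ENNReal.ofReal_le_ofReal
        apply Real.rpow_le_rpow_of_exponent_le (by norm_num)
        push_cast
        nlinarith
      calc ((whitney d U (k + 1)).encard : ENNReal) *
            ENNReal.ofReal ((2 : ℝ) ^ (-((k + 1 : ℕ) : ℝ) * ((d : ℝ) - 1 + α)))
          ≤ ((3 : ENNReal) ^ d * 2 ^ d * (boxCount d (frontier U) k : ENNReal)) *
            ENNReal.ofReal ((2 : ℝ) ^ (-(k : ℝ) * ((d : ℝ) - 1 + α))) :=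
            mul_le_mul' h1' hwmono
        _ = ((3 : ENNReal) ^ d * 2 ^ d) * ((boxCount d (frontier U) k : ENNReal) *
            ENNReal.ofReal ((2 : ℝ) ^ (-(k : ℝ) * ((d : ℝ) - 1 + α)))) := by ring
    refine lt_of_le_of_lt (ENNReal.tsum_le_tsum hterm) ?_
    rw [ENNReal.tsum_mul_left]
    refine ENNReal.mul_lt_top ?_ hsum
    refine ENNReal.mul_lt_top ?_ ?_ <;> exact ENNReal.pow_lt_top (by norm_num)
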